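/- Let p be an odd prime, let a, b ∈ ℂ_p with R = |a − b|_p > 0, and let x₀ ∈ ℂ_p with |x₀ − a|_p = R and x₀ ∉ 𝒜(a,b). Let ζ be a root of unity in ℂ_p whose order n is coprime to p and satisfies |(a − x₀)/(a − b) − ζ|_p < 1 (then necessarily n ≥ 2, so ζ ≠ 1), and let λ₀ be the least positive integer with p^{λ₀} ≡ 1 (mod n). Then for every α ∈ ℤ with α ≥ 0, taking the path sequence φ(k) = α + λ₀·k, the integral ∫_{𝒜(a,b),φ} 1/(x − x₀) dx exists and equals 1/(1 − ζ^{p^α}). -/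

import Mathlib

/-!
Throughout, `K` plays the role of `ℂ_p`, the completion of an algebraic closure of `ℚ_p`:
it is a complete, algebraically closed, nonarchimedean (ultrametric) normed field equipped
with an isometric `ℚ_[p]`-algebra structure (hypothesis `hKext`).
-/

open scoped BigOperators

/-- A *path sequence*: a function defined (positive-valued and strictly increasing)
for `k ≥ k₀`, for some positive integer `k₀`. -/
structure PathSeq where
  toFun : ℕ → ℕ
  k₀ : ℕ
  k₀_pos : 0 < k₀
  pos : ∀ k, k₀ ≤ k → 0 < toFun k
  mono : ∀ k l, k₀ ≤ k → k < l → toFun k < toFun l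

/-- The Riemann-type sum `A_{f,φ}(k)` (with `N = φ(k)`):
`p^{-N} ∑_ζ (b - a) ζ · f (a + (b - a) ζ)`, `ζ` ranging over the `p^N`-th roots of unity. -/
noncomputable def Asum (p : ℕ) (K : Type*) [NormedField K] (a b : K) (f : K → K) (N : ℕ) : K :=
  ((p : K) ^ N)⁻¹ *
    ∑ ζ ∈ Polynomial.nthRootsFinset (p ^ N) (1 : K), (b - a) * ζ * f (a + (b - a) * ζ)

/-- `ψ` is, for `k ≥ k₀`, a subsequence of the path sequence `φ`. -/
def SubseqFrom (ψ φ : PathSeq) (k₀ : ℕ) : Prop :=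
  ∃ σ : ℕ → ℕ, (∀ k l, k₀ ≤ k → k < l → σ k < σ l) ∧
    ∀ k, k₀ ≤ k → φ.k₀ ≤ σ k ∧ ψ.toFun k = φ.toFun (σ k)

/-- An *interlocked* family of path sequences: nonempty, and any two members have a common
member-subsequence. -/
def Interlocked (Φ : Set PathSeq) : Prop :=
  Φ.Nonempty ∧ ∀ φ₁ ∈ Φ, ∀ φ₂ ∈ Φ, ∃ φ₃ ∈ Φ, ∃ k₀ : ℕ, 0 < k₀ ∧
    SubseqFrom φ₃ φ₁ k₀ ∧ SubseqFrom φ₃ φ₂ k₀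

/-- `∫_{𝒜(a,b),Φ} f(x) dx = L`: for every `ε > 0` there are `φ ∈ Φ` and `M` such that
`|A_{f,φ}(k) - L| < ε` for all `k > M` (in the domain of `φ`). -/
def HasIntegral (p : ℕ) (K : Type*) [NormedField K] (a b : K) (f : K → K)
    (Φ : Set PathSeq) (L : K) : Prop :=
  ∀ ε : ℝ, 0 < ε → ∃ φ ∈ Φ, ∃ M : ℕ, φ.k₀ ≤ M ∧
    ∀ k, M < k → ‖Asum p K a b f (φ.toFun k) - L‖ < ε

/-- `f` is holomorphic on `S`: its values on `S` are given by the single power series with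
coefficients `c`, centered at `b`, convergent on `S`. -/
def HolomorphicOn' (K : Type*) [NormedField K] (c : ℕ → K) (b : K) (f : K → K)
    (S : Set K) : Prop :=
  ∀ x ∈ S, Summable (fun n : ℕ => c n * (x - b) ^ n) ∧ f x = ∑' n : ℕ, c n * (x - b) ^ n

/-- The arc `𝒜(a,b)`: the open disc of radius `R = |a - b|` around `b`. -/
def arc (K : Type*) [NormedField K] (a b : K) : Set K := {x : K | ‖x - b‖ < ‖a - b‖}

/-- `c` are controlled coefficients of order `β` (for the radius `R`). -/
def Controlled (K : Type*) [NormedField K] (c : ℕ → K) (R β : ℝ) : Prop :=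
  ∃ M n₀ : ℝ, 0 < n₀ ∧ ∀ n : ℕ, n₀ < (n : ℝ) → ‖c n‖ * R ^ n < M * (n : ℝ) ^ β

/-- The interlocked family `Φ_α = {k ↦ α + λ k : λ ∈ ℤ⁺}`. -/
def PhiAlpha (α : ℕ) : Set PathSeq :=
  {φ : PathSeq | ∃ lam : ℕ, 0 < lam ∧ ∀ k : ℕ, φ.toFun k = α + lam * k}


section AuxAlg

variable {K : Type*} [Field K] [DecidableEq K]

lemma aux_nthRootsFinset_eq_image {m : ℕ} (hm : 0 < m) {μ : K} (hμ : IsPrimitiveRoot μ m) :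
    Polynomial.nthRootsFinset m (1 : K) = (Finset.range m).image (μ ^ ·) := by
  haveI : NeZero m := ⟨hm.ne'⟩
  ext η
  simp only [Finset.mem_image, Finset.mem_range, Polynomial.mem_nthRootsFinset hm]
  constructor
  · intro h
    obtain ⟨i, hi, hiη⟩ := hμ.eq_pow_of_pow_eq_one h
    exact ⟨i, hi, hiη⟩
  · rintro ⟨i, _, rfl⟩
    rw [← pow_mul, mul_comm, pow_mul, hμ.pow_eq_one, one_pow]

lemma aux_sum_pow {m : ℕ} (hm : 0 < m) {μ : K} (hμ : IsPrimitiveRoot μ m) (i : ℕ) :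
    ∑ η ∈ Polynomial.nthRootsFinset m (1 : K), η ^ i = if m ∣ i then (m : K) else 0 := by
  rw [aux_nthRootsFinset_eq_image hm hμ,
    Finset.sum_image (fun a ha b hb h =>
      hμ.pow_inj (Finset.mem_range.mp ha) (Finset.mem_range.mp hb) h)]
  have hswap : ∀ j : ℕ, (μ ^ j) ^ i = (μ ^ i) ^ j := fun j => by
    rw [← pow_mul, mul_comm, pow_mul]
  simp only [hswap]
  by_cases hdvd : m ∣ i
  · rw [if_pos hdvd, (hμ.pow_eq_one_iff_dvd i).mpr hdvd]
    simp
  · rw [if_neg hdvd]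
    have hne : μ ^ i ≠ 1 := fun h => hdvd ((hμ.pow_eq_one_iff_dvd i).mp h)
    rw [geom_sum_eq hne m, ← pow_mul, mul_comm, pow_mul, hμ.pow_eq_one, one_pow,
      sub_self, zero_div]

lemma aux_key {m : ℕ} (hm : 0 < m) {μ : K} (hμ : IsPrimitiveRoot μ m) {t : K}
    (ht : t ^ m ≠ 1) :
    ∑ η ∈ Polynomial.nthRootsFinset m (1 : K), η * (η - t)⁻¹ = (m : K) * (1 - t ^ m)⁻¹ := by
  have h1t : (1 : K) - t ^ m ≠ 0 := sub_ne_zero.mpr (Ne.symm ht)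
  have hterm : ∀ η ∈ Polynomial.nthRootsFinset m (1 : K),
      η * (η - t)⁻¹
        = (∑ j ∈ Finset.range m, η ^ (j + 1) * t ^ (m - 1 - j)) * (1 - t ^ m)⁻¹ := by
    intro η hη
    have hη1 : η ^ m = 1 := (Polynomial.mem_nthRootsFinset hm (1 : K)).mp hη
    have hηt : η - t ≠ 0 := by
      intro h
      apply ht
      rw [← sub_eq_zero.mp h]
      exact hη1
    have hgeom : (∑ j ∈ Finset.range m, η ^ j * t ^ (m - 1 - j)) * (η - t) = 1 - t ^ m := by
      rw [geom_sum₂_mul, hη1]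
    have hinv : (η - t)⁻¹
        = (∑ j ∈ Finset.range m, η ^ j * t ^ (m - 1 - j)) * (1 - t ^ m)⁻¹ := by
      field_simp
      linear_combination -hgeom
    rw [hinv, ← mul_assoc]
    congr 1
    rw [Finset.mul_sum]
    exact Finset.sum_congr rfl fun j _ => by ring
  rw [Finset.sum_congr rfl hterm, ← Finset.sum_mul]
  congr 1
  rw [Finset.sum_comm]
  have hinner : ∀ j ∈ Finset.range m,
      (∑ η ∈ Polynomial.nthRootsFinset m (1 : K), η ^ (j + 1) * t ^ (m - 1 - j))
        = (if m ∣ j + 1 then (m : K) else 0) * t ^ (m - 1 - j) := by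
    intro j _
    rw [← Finset.sum_mul, aux_sum_pow hm hμ (j + 1)]
  rw [Finset.sum_congr rfl hinner]
  rw [Finset.sum_eq_single_of_mem (m - 1) (Finset.mem_range.mpr (by omega))]
  · have h1 : m - 1 + 1 = m := by omega
    rw [h1, if_pos dvd_rfl, Nat.sub_self, pow_zero, mul_one]
  · intro j hj hne
    have hj' := Finset.mem_range.mp hj
    have : ¬ m ∣ j + 1 := by
      intro hd
      have := Nat.le_of_dvd (by omega) hd
      omega
    rw [if_neg this, zero_mul]

end AuxAlg


section AuxNorm

variable {K : Type*} [NormedField K] [IsUltrametricDist K]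

lemma aux_norm_sub_le_max (x y : K) : ‖x - y‖ ≤ max ‖x‖ ‖y‖ := by
  rw [sub_eq_add_neg]
  simpa [norm_neg] using IsUltrametricDist.norm_add_le_max x (-y)

omit [IsUltrametricDist K] in
lemma aux_norm_eq_one_of_pow {x : K} {m : ℕ} (hm : m ≠ 0) (h : x ^ m = 1) : ‖x‖ = 1 := by
  have hpow : ‖x‖ ^ m = 1 := by rw [← norm_pow, h, norm_one]
  rcases lt_trichotomy ‖x‖ 1 with h1 | h1 | h1
  · exact absurd hpow (by
      have := pow_lt_one₀ (norm_nonneg x) h1 hm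
      linarith)
  · exact h1
  · exact absurd hpow (by
      have := one_lt_pow₀ h1 hm
      linarith)

lemma aux_norm_one_sub {m : ℕ} (hm : 1 < m) (hmK : ‖(m : K)‖ = 1) {ξ : K}
    (hξ1 : ξ ≠ 1) (hξ : ξ ^ m = 1) : ‖1 - ξ‖ = 1 := by
  have hξnorm : ‖ξ‖ = 1 := aux_norm_eq_one_of_pow (by omega) hξ
  have hle : ‖(1 : K) - ξ‖ ≤ 1 := by
    refine (aux_norm_sub_le_max 1 ξ).trans ?_
    simp [hξnorm]
  have hgeom0 : ∑ i ∈ Finset.range m, ξ ^ i = 0 := by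
    have h := geom_sum_mul ξ m
    rw [hξ, sub_self] at h
    rcases mul_eq_zero.mp h with h' | h'
    · exact h'
    · exact absurd (sub_eq_zero.mp h') hξ1
  have hmT : (m : K) = (1 - ξ) * ∑ i ∈ Finset.range m, ∑ j ∈ Finset.range i, ξ ^ j := by
    have h1 : (m : K) = ∑ i ∈ Finset.range m, (1 - ξ ^ i) := by
      rw [Finset.sum_sub_distrib, hgeom0, sub_zero, Finset.sum_const, Finset.card_range,
        nsmul_eq_mul, mul_one]
    rw [h1, Finset.mul_sum]
    refine Finset.sum_congr rfl fun i _ => ?_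
    have h := geom_sum_mul ξ i
    linear_combination h
  have hT : ‖∑ i ∈ Finset.range m, ∑ j ∈ Finset.range i, ξ ^ j‖ ≤ 1 := by
    refine IsUltrametricDist.norm_sum_le_of_forall_le_of_nonneg zero_le_one fun i _ => ?_
    refine IsUltrametricDist.norm_sum_le_of_forall_le_of_nonneg zero_le_one fun j _ => ?_
    rw [norm_pow, hξnorm, one_pow]
  have hge : (1 : ℝ) ≤ ‖(1 : K) - ξ‖ := by
    calc (1 : ℝ) = ‖(m : K)‖ := hmK.symm
      _ = ‖(1 : K) - ξ‖ * ‖∑ i ∈ Finset.range m, ∑ j ∈ Finset.range i, ξ ^ j‖ := by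
          rw [hmT, norm_mul]
      _ ≤ ‖(1 : K) - ξ‖ * 1 := mul_le_mul_of_nonneg_left hT (norm_nonneg _)
      _ = ‖(1 : K) - ξ‖ := mul_one _
  linarith

lemma aux_pow_p_sub {p : ℕ} (hp : p.Prime) {x y : K} (hx : ‖x‖ ≤ 1) (hy : ‖y‖ ≤ 1) :
    ‖x ^ p - y ^ p‖ ≤ max ‖(p : K)‖ ‖x - y‖ * ‖x - y‖ := by
  set d : K := x - y with hd_def
  have hd : ‖d‖ ≤ 1 := (aux_norm_sub_le_max x y).trans (max_le hx hy)
  have hd0 : (0 : ℝ) ≤ ‖d‖ := norm_nonneg _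
  have hB : (0 : ℝ) ≤ max ‖(p : K)‖ ‖d‖ * ‖d‖ :=
    mul_nonneg (le_trans (norm_nonneg _) (le_max_left _ _)) hd0
  have expand : x ^ p - y ^ p
      = ∑ i ∈ Finset.range p, y ^ i * d ^ (p - i) * (p.choose i : K) := by
    have hx' : x = y + d := by rw [hd_def]; ring
    rw [hx', add_pow, Finset.sum_range_succ]
    simp only [Nat.choose_self, Nat.sub_self, pow_zero, mul_one, Nat.cast_one]
    ring
  rw [expand]
  refine IsUltrametricDist.norm_sum_le_of_forall_le_of_nonneg hB fun i hi => ?_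
  have hip : i < p := Finset.mem_range.mp hi
  rw [norm_mul, norm_mul, norm_pow, norm_pow]
  have hyi : ‖y‖ ^ i ≤ 1 := pow_le_one₀ (norm_nonneg _) hy
  rcases Nat.eq_zero_or_pos i with rfl | hi0
  · -- term: ‖y‖^0 * ‖d‖^p * ‖1‖ = ‖d‖^p ≤ ‖d‖ * ‖d‖
    simp only [pow_zero, one_mul, Nat.sub_zero, Nat.choose_zero_right, Nat.cast_one, norm_one,
      mul_one]
    have h1 : ‖d‖ ^ p ≤ ‖d‖ ^ 2 :=
      pow_le_pow_of_le_one hd0 hd hp.two_le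
    have h2 : ‖d‖ ^ 2 = ‖d‖ * ‖d‖ := sq ‖d‖
    calc ‖d‖ ^ p ≤ ‖d‖ * ‖d‖ := by rw [← h2]; exact h1
      _ ≤ max ‖(p : K)‖ ‖d‖ * ‖d‖ :=
          mul_le_mul_of_nonneg_right (le_max_right _ _) hd0
  · have hchoose : ‖((p.choose i : ℕ) : K)‖ ≤ ‖(p : K)‖ := by
      obtain ⟨c, hc⟩ := hp.dvd_choose_self hi0.ne' hip
      rw [hc, Nat.cast_mul, norm_mul]
      calc ‖(p : K)‖ * ‖(c : K)‖ ≤ ‖(p : K)‖ * 1 :=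
            mul_le_mul_of_nonneg_left (IsUltrametricDist.norm_natCast_le_one K c)
              (norm_nonneg _)
        _ = ‖(p : K)‖ := mul_one _
    have hdpow : ‖d‖ ^ (p - i) ≤ ‖d‖ := by
      calc ‖d‖ ^ (p - i) ≤ ‖d‖ ^ 1 := pow_le_pow_of_le_one hd0 hd (by omega)
        _ = ‖d‖ := pow_one _
    calc ‖y‖ ^ i * ‖d‖ ^ (p - i) * ‖((p.choose i : ℕ) : K)‖
        ≤ 1 * ‖d‖ * ‖(p : K)‖ := by
          refine mul_le_mul (mul_le_mul hyi hdpow (by positivity) zero_le_one) hchoose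
            (norm_nonneg _) (by positivity)
      _ = ‖(p : K)‖ * ‖d‖ := by ring
      _ ≤ max ‖(p : K)‖ ‖d‖ * ‖d‖ := mul_le_mul_of_nonneg_right (le_max_left _ _) hd0

lemma aux_iter {p : ℕ} (hp : p.Prime) {t ζ : K} (ht : ‖t‖ ≤ 1) (hζ : ‖ζ‖ ≤ 1) (N : ℕ) :
    ‖t ^ p ^ N - ζ ^ p ^ N‖ ≤ (max ‖(p : K)‖ ‖t - ζ‖) ^ N * ‖t - ζ‖ := by
  set r : ℝ := max ‖(p : K)‖ ‖t - ζ‖ with hr_def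
  have hr0 : (0 : ℝ) ≤ r := le_trans (norm_nonneg _) (le_max_left _ _)
  have he1 : ‖t - ζ‖ ≤ 1 := (aux_norm_sub_le_max t ζ).trans (max_le ht hζ)
  have hr1 : r ≤ 1 := max_le (IsUltrametricDist.norm_natCast_le_one K p) he1
  induction N with
  | zero => simp
  | succ N ih =>
      have hxN : ‖t ^ p ^ N‖ ≤ 1 := by
        rw [norm_pow]; exact pow_le_one₀ (norm_nonneg _) ht
      have hyN : ‖ζ ^ p ^ N‖ ≤ 1 := by
        rw [norm_pow]; exact pow_le_one₀ (norm_nonneg _) hζ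
      have hstep := aux_pow_p_sub hp hxN hyN
      have heq : ∀ z : K, z ^ p ^ (N + 1) = (z ^ p ^ N) ^ p := fun z => by
        rw [← pow_mul, pow_succ]
      rw [heq t, heq ζ]
      refine hstep.trans ?_
      have hlt : ‖t ^ p ^ N - ζ ^ p ^ N‖ ≤ r := by
        refine ih.trans ?_
        calc r ^ N * ‖t - ζ‖ ≤ 1 * ‖t - ζ‖ :=
              mul_le_mul_of_nonneg_right (pow_le_one₀ hr0 hr1) (norm_nonneg _)
          _ = ‖t - ζ‖ := one_mul _
          _ ≤ r := le_max_right _ _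
      have hmax : max ‖(p : K)‖ ‖t ^ p ^ N - ζ ^ p ^ N‖ ≤ r :=
        max_le (le_max_left _ _) hlt
      calc max ‖(p : K)‖ ‖t ^ p ^ N - ζ ^ p ^ N‖ * ‖t ^ p ^ N - ζ ^ p ^ N‖
          ≤ r * (r ^ N * ‖t - ζ‖) :=
            mul_le_mul hmax ih (norm_nonneg _) hr0
        _ = r ^ (N + 1) * ‖t - ζ‖ := by ring

end AuxNorm

/-- If `x₀` is on the circle (`|x₀ - a| = R`) but not in `𝒜(a,b)`, `ζ` is
the root of unity of order `n` coprime to `p` with `|(a-x₀)/(a-b) - ζ| < 1`, and `λ₀` is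
the least positive integer with `p^{λ₀} ≡ 1 (mod n)`, then for every `α ≥ 0`, using the
path sequence `φ(k) = α + λ₀ k`, `∫_{𝒜(a,b),φ} 1/(x - x₀) dx = 1/(1 - ζ^{p^α})`. -/
theorem stmt_8 (p : ℕ) [Fact (Nat.Prime p)] (hp2 : p ≠ 2)
    (K : Type*) [NormedField K] [CompleteSpace K] [IsAlgClosed K] [IsUltrametricDist K]
    [Algebra ℚ_[p] K] (hKext : ∀ q : ℚ_[p], ‖algebraMap ℚ_[p] K q‖ = ‖q‖)
    (a b : K) (hR : 0 < ‖a - b‖) (x₀ : K) (hx₀ : ‖x₀ - a‖ = ‖a - b‖)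
    (hx₀' : x₀ ∉ arc K a b)
    (ζ : K) (n : ℕ) (hfin : IsOfFinOrder ζ) (hord : orderOf ζ = n) (hcop : n.Coprime p)
    (hclose : ‖(a - x₀) / (a - b) - ζ‖ < 1)
    (lam : ℕ) (hlam : 0 < lam) (hlam1 : p ^ lam ≡ 1 [MOD n])
    (hmin : ∀ m : ℕ, 0 < m → p ^ m ≡ 1 [MOD n] → lam ≤ m) (α : ℕ) :
    Filter.Tendsto (fun k : ℕ => Asum p K a b (fun x => (x - x₀)⁻¹) (α + lam * k))
      Filter.atTop (nhds (1 - ζ ^ p ^ α)⁻¹) := by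
  classical
  have hp : p.Prime := Fact.out
  have hab : a - b ≠ 0 := fun h => by rw [h, norm_zero] at hR; exact lt_irrefl _ hR
  have hba : b - a ≠ 0 := fun h => hab (by
    have : a - b = -(b - a) := by ring
    rw [this, h, neg_zero])
  set t : K := (a - x₀) / (a - b) with htdef
  -- CharZero
  have hinj : Function.Injective (algebraMap ℚ_[p] K) := by
    intro x y h
    have h0 : ‖x - y‖ = 0 := by
      rw [← hKext, map_sub, h, sub_self, norm_zero]
    exact sub_eq_zero.mp (norm_eq_zero.mp h0)
  haveI : CharZero K := charZero_of_injective_algebraMap hinj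
  have hnormNat : ∀ k : ℕ, ‖(k : K)‖ = ‖(k : ℚ_[p])‖ := fun k => by
    rw [← map_natCast (algebraMap ℚ_[p] K), hKext]
  have hpK : ‖(p : K)‖ < 1 := by rw [hnormNat]; exact Padic.norm_p_lt_one
  -- facts about n and ζ
  have hn_pos : 0 < n := hord ▸ hfin.orderOf_pos
  have hζn : ζ ^ n = 1 := by rw [← hord]; exact pow_orderOf_eq_one ζ
  have hn1 : n ≠ 1 := by
    intro h
    have hζ1 : ζ = 1 := orderOf_eq_one_iff.mp (by rw [hord, h])
    rw [hζ1] at hclose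
    have ht1 : t - 1 = (b - x₀) / (a - b) := by
      rw [htdef]; field_simp; ring
    rw [ht1, norm_div, div_lt_one hR] at hclose
    exact hx₀' (by
      show ‖x₀ - b‖ < ‖a - b‖
      rwa [norm_sub_rev])
  have hn2 : 1 < n := lt_of_le_of_ne hn_pos (Ne.symm hn1)
  have hpn : ¬ (p : ℤ) ∣ (n : ℤ) := by
    intro h
    have hdn : p ∣ n := Int.ofNat_dvd.mp h
    have : p ∣ Nat.gcd n p := Nat.dvd_gcd hdn dvd_rfl
    rw [hcop] at this
    exact hp.one_lt.ne' (Nat.dvd_one.mp this)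
  have hnK : ‖(n : K)‖ = 1 := by
    rw [hnormNat]
    have hle : ‖((n : ℤ) : ℚ_[p])‖ ≤ 1 := Padic.norm_int_le_one _
    have hnlt : ¬ ‖((n : ℤ) : ℚ_[p])‖ < 1 := by
      rw [Padic.norm_intCast_lt_one_iff]
      exact hpn
    push_cast at hle hnlt
    linarith
  have hζnorm : ‖ζ‖ = 1 := aux_norm_eq_one_of_pow hn_pos.ne' hζn
  have htζ : ‖t - ζ‖ < 1 := hclose
  have htnorm : ‖t‖ ≤ 1 := by
    have h1 : t = (t - ζ) + ζ := by ring
    rw [h1]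
    refine (IsUltrametricDist.norm_add_le_max _ _).trans ?_
    rw [hζnorm]
    exact max_le htζ.le le_rfl
  set e : ℝ := ‖t - ζ‖ with hedef
  set r : ℝ := max ‖(p : K)‖ e with hrdef
  have hr1 : r < 1 := max_lt hpK htζ
  have hr0 : (0 : ℝ) ≤ r := le_trans (norm_nonneg _) (le_max_left _ _)
  have he0 : (0 : ℝ) ≤ e := norm_nonneg _
  set ξ : K := ζ ^ p ^ α with hξdef
  have hξn : ξ ^ n = 1 := by
    rw [hξdef, ← pow_mul, mul_comm, pow_mul, hζn, one_pow]
  have hξ1 : ξ ≠ 1 := by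
    intro h
    have hdvd : n ∣ p ^ α := hord ▸ orderOf_dvd_of_pow_eq_one h
    exact hn1 (Nat.Coprime.eq_one_of_dvd (hcop.pow_right α) hdvd)
  have hnormξ : ‖(1 : K) - ξ‖ = 1 := aux_norm_one_sub hn2 hnK hξ1 hξn
  -- ζ ^ p ^ (α + lam * k) = ξ
  have hζpow : ∀ k : ℕ, ζ ^ p ^ (α + lam * k) = ξ := by
    intro k
    obtain ⟨q, hq⟩ : n ∣ p ^ (lam * k) - 1 := by
      have h1 : 1 ≤ p ^ (lam * k) := Nat.one_le_pow _ _ hp.pos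
      have h2 : p ^ (lam * k) ≡ 1 [MOD n] := by
        have := hlam1.pow k
        rwa [one_pow, ← pow_mul] at this
      exact (Nat.modEq_iff_dvd' h1).mp h2.symm
    have hpk : p ^ (lam * k) = n * q + 1 := by
      have h1 : 1 ≤ p ^ (lam * k) := Nat.one_le_pow _ _ hp.pos
      omega
    have hξnq : ξ ^ (n * q) = 1 := by rw [pow_mul, hξn, one_pow]
    rw [pow_add, pow_mul, ← hξdef, hpk, pow_succ, hξnq, one_mul]
  -- error bound
  have hbound : ∀ k : ℕ, ‖t ^ p ^ (α + lam * k) - ξ‖ ≤ r ^ (α + lam * k) * e := by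
    intro k
    rw [← hζpow k]
    exact aux_iter hp htnorm hζnorm.le (α + lam * k)
  -- t ^ p ^ N ≠ 1
  have hFne : ∀ k : ℕ, t ^ p ^ (α + lam * k) ≠ 1 := by
    intro k h
    have h1 : ‖(1 : K) - ξ‖ ≤ r ^ (α + lam * k) * e := h ▸ hbound k
    have h2 : r ^ (α + lam * k) * e ≤ 1 * e :=
      mul_le_mul_of_nonneg_right (pow_le_one₀ hr0 hr1.le) he0
    rw [hnormξ] at h1
    have h3 : r ^ (α + lam * k) * e ≤ e := by simpa using h2
    linarith
  -- closed form of the Riemann sums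
  have hAsum : ∀ k : ℕ, Asum p K a b (fun x => (x - x₀)⁻¹) (α + lam * k)
      = (1 - t ^ p ^ (α + lam * k))⁻¹ := by
    intro k
    set N : ℕ := α + lam * k with hNdef
    have hmpos : 0 < p ^ N := pow_pos hp.pos N
    haveI : NeZero ((p ^ N : ℕ) : K) := ⟨Nat.cast_ne_zero.mpr hmpos.ne'⟩
    obtain ⟨μ, hμ⟩ := HasEnoughRootsOfUnity.exists_primitiveRoot K (p ^ N)
    have hsum := aux_key hmpos hμ (t := t) (hFne k)
    unfold Asum
    have hterm : ∀ η ∈ Polynomial.nthRootsFinset (p ^ N) (1 : K),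
        (b - a) * η * ((fun x => (x - x₀)⁻¹) (a + (b - a) * η)) = η * (η - t)⁻¹ := by
      intro η hη
      simp only
      have harg : a + (b - a) * η - x₀ = (b - a) * (η - t) := by
        rw [htdef]
        field_simp
        ring
      rw [harg, mul_inv]
      calc (b - a) * η * ((b - a)⁻¹ * (η - t)⁻¹)
          = ((b - a) * (b - a)⁻¹) * (η * (η - t)⁻¹) := by ring
        _ = η * (η - t)⁻¹ := by rw [mul_inv_cancel₀ hba, one_mul]
    rw [Finset.sum_congr rfl hterm, hsum]
    push_cast
    rw [← mul_assoc, inv_mul_cancel₀ (pow_ne_zero N (Nat.cast_ne_zero.mpr hp.pos.ne')),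
      one_mul]
  -- convergence
  have hne0 : (1 : K) - ξ ≠ 0 := fun h => by
    rw [h, norm_zero] at hnormξ; exact one_ne_zero hnormξ.symm
  have htends : Filter.Tendsto (fun k : ℕ => t ^ p ^ (α + lam * k))
      Filter.atTop (nhds ξ) := by
    rw [tendsto_iff_norm_sub_tendsto_zero]
    have hub : ∀ k : ℕ, ‖t ^ p ^ (α + lam * k) - ξ‖ ≤ r ^ k * e := by
      intro k
      refine (hbound k).trans ?_
      have hkN : k ≤ α + lam * k :=
        (Nat.le_mul_of_pos_left k hlam).trans (Nat.le_add_left _ _)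
      exact mul_le_mul_of_nonneg_right (pow_le_pow_of_le_one hr0 hr1.le hkN) he0
    refine squeeze_zero (fun k => norm_nonneg _) hub ?_
    simpa using (tendsto_pow_atTop_nhds_zero_of_lt_one hr0 hr1).mul_const e
  have hfinal : Filter.Tendsto (fun k : ℕ => (1 - t ^ p ^ (α + lam * k))⁻¹)
      Filter.atTop (nhds ((1 - ξ)⁻¹)) :=
    (Filter.Tendsto.sub tendsto_const_nhds htends).inv₀ hne0
  exact Filter.Tendsto.congr (fun k => (hAsum k).symm) hfinal
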